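/- For every Büchi automaton A over the alphabet Σ × {*,⊤,⊥} × {*,⊤,⊥} (Σ a finite alphabet) there exists a Büchi automaton B over the alphabet Σ ∪ 2^Σ such that for every data ω-word w having infinitely many zones (hence all zones finite): Profile(w) ∈ L(A) if and only if Proj(Zonal(w)) ∈ L(B). -/

import Mathlib

/-!
Zonal automata: every profile Büchi automaton `A` over
`Σ × {*,⊤,⊥} × {*,⊤,⊥}` has a zonal automaton `B` over `Σ ∪ 2^Σ` such that,
for every data ω-word `w` with infinitely many zones,
`Profile(w) ∈ L(A)` iff `Proj(Zonal(w)) ∈ L(B)`.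
-/

/-- The profile components `*`, `⊤`, `⊥`. -/
inductive Tri : Type
  | star : Tri
  | top : Tri
  | bot : Tri

/-- A Büchi automaton over the alphabet `Γ`: a finite state set, an initial
state, a transition relation `μ ⊆ Q × Γ × Q` and an accepting set `F ⊆ Q`. -/
structure Buchi (Γ : Type*) where
  Q : Type
  fin : Fintype Q
  init : Q
  trans : Set (Q × Γ × Q)
  accept : Set Q

/-- Acceptance: some run on the ω-word `x` visits an accepting state
infinitely often. -/
def Buchi.Accepts {Γ : Type*} (M : Buchi Γ) (x : ℕ → Γ) : Prop :=
  ∃ ρ : ℕ → M.Q,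
    (M.init, x 0, ρ 0) ∈ M.trans ∧
    (∀ i, (ρ i, x (i + 1), ρ (i + 1)) ∈ M.trans) ∧
    ∃ q ∈ M.accept, ∀ N, ∃ i, N ≤ i ∧ ρ i = q

variable {A : Type*} [Fintype A] [DecidableEq A]

/-- The `i`-th letter of `Profile(w)`: the label of position `i` together with
its left profile (`*` at the first position, `⊤` if the previous data value is
equal, `⊥` otherwise) and its right profile (`⊤` if the next data value is
equal, `⊥` otherwise). -/
def profileAt (w : ℕ → A × ℕ) (i : ℕ) : A × Tri × Tri :=
  ((w i).1,
    if i = 0 then Tri.star else if (w (i - 1)).2 = (w i).2 then Tri.top else Tri.bot,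
    if (w i).2 = (w (i + 1)).2 then Tri.top else Tri.bot)

/-- `k` enumerates (in increasing order) the last positions of the zones of
`w`; its existence says exactly that `w` has infinitely many zones (hence all
zones are finite). -/
def IsZonalPartition (w : ℕ → A × ℕ) (k : ℕ → ℕ) : Prop :=
  StrictMono k ∧ ∀ i : ℕ, ((w i).2 ≠ (w (i + 1)).2 ↔ ∃ j, k j = i)

/-- The first position of the `j`-th zone, given the enumeration `k` of the
last positions of the zones. -/
def zoneStartPos (k : ℕ → ℕ) : ℕ → ℕ
  | 0 => 0
  | j + 1 => k j + 1

/-- The set of labels occurring at positions `lo, …, hi` of `w`. -/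
def segLabels (w : ℕ → A × ℕ) (lo hi : ℕ) : Finset A :=
  (Finset.Icc lo hi).image fun i => (w i).1

/-- `z` is the label sequence `Proj(Zonal(w))` of the zonal word of `w`
(w.r.t. the zonal partition `k`): each zone, preceded by the letter
`S ∈ 2^Σ` for which it is an `S`-zone, contributes its block of labels. -/
def IsZonalProj (w : ℕ → A × ℕ) (k : ℕ → ℕ) (z : ℕ → A ⊕ Finset A) : Prop :=
  ∀ j : ℕ,
    z (zoneStartPos k j + j) = Sum.inr (segLabels w (zoneStartPos k j) (k j)) ∧
    ∀ i, zoneStartPos k j ≤ i → i ≤ k j → z (i + j + 1) = Sum.inl (w i).1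

/-! ### Auxiliary machinery -/

/-- Modes of the zonal automaton: what kind of input symbol comes next and
with which left profile it should be read. -/
inductive ZMode : Type
  | star | top | bot | inr
  deriving DecidableEq

instance : Fintype ZMode :=
  ⟨{ZMode.star, ZMode.top, ZMode.bot, ZMode.inr}, by intro x; cases x <;> simp⟩

def triL : ZMode → Tri
  | .star => .star
  | .top => .top
  | _ => .bot

def triR : Bool → Tri
  | true => .top
  | false => .bot

def modeR : Bool → ZMode
  | true => .top
  | false => .inr

/-- Transition relation of the zonal automaton. -/
inductive ZTrans (M : Buchi (A × Tri × Tri)) :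
    Option (M.Q × ZMode) → (A ⊕ Finset A) → Option (M.Q × ZMode) → Prop where
  | init (S : Finset A) : ZTrans M none (Sum.inr S) (some (M.init, ZMode.star))
  | marker (q : M.Q) (S : Finset A) :
      ZTrans M (some (q, ZMode.inr)) (Sum.inr S) (some (q, ZMode.bot))
  | letter (q q' : M.Q) (a : A) (e : ZMode) (r : Bool) (he : e ≠ ZMode.inr)
      (ht : (q, (a, triL e, triR r), q') ∈ M.trans) :
      ZTrans M (some (q, e)) (Sum.inl a) (some (q', modeR r))

/-- The zonal automaton. -/
def zB (M : Buchi (A × Tri × Tri)) : Buchi (A ⊕ Finset A) where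
  Q := Option (M.Q × ZMode)
  fin := by haveI := M.fin; exact inferInstance
  init := none
  trans := {t | ZTrans M t.1 t.2.1 t.2.2}
  accept := {s | ∃ q m, s = some (q, m) ∧ q ∈ M.accept}

def exQ (M : Buchi (A × Tri × Tri)) : Option (M.Q × ZMode) → M.Q
  | none => M.init
  | some p => p.1

/-! ### Positions -/

def mpos (k : ℕ → ℕ) (j : ℕ) : ℕ := zoneStartPos k j + j

def fgr (f : ℕ → ℕ) (n : ℕ) : ℕ := Nat.findGreatest (fun j => f j ≤ n) n

lemma fgr_spec {f : ℕ → ℕ} (hf : StrictMono f) (h0 : f 0 = 0) (n : ℕ) :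
    f (fgr f n) ≤ n ∧ n < f (fgr f n + 1) := by
  have h1 : f (fgr f n) ≤ n :=
    Nat.findGreatest_spec (P := fun j => f j ≤ n) (Nat.zero_le n) (by simp [h0])
  refine ⟨h1, ?_⟩
  by_cases h : fgr f n + 1 ≤ n
  · have := Nat.findGreatest_is_greatest (P := fun j => f j ≤ n)
      (Nat.lt_succ_self _) h
    exact lt_of_not_ge this
  · push_neg at h
    have hg : fgr f n ≤ f (fgr f n) := hf.le_apply
    have : fgr f n = n := le_antisymm (hg.trans h1) (Nat.lt_succ_iff.mp h)
    calc n < n + 1 := Nat.lt_succ_self n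
      _ ≤ f (fgr f n + 1) := by rw [this] at *; exact hf.le_apply

lemma fgr_eq {f : ℕ → ℕ} (hf : StrictMono f) (h0 : f 0 = 0) {j n : ℕ}
    (h1 : f j ≤ n) (h2 : n < f (j + 1)) : fgr f n = j := by
  obtain ⟨hA, hB⟩ := fgr_spec hf h0 n
  have l1 : fgr f n < j + 1 := hf.lt_iff_lt.mp (lt_of_le_of_lt hA h2)
  have l2 : j < fgr f n + 1 := hf.lt_iff_lt.mp (lt_of_le_of_lt h1 hB)
  omega

def jz (k : ℕ → ℕ) (n : ℕ) : ℕ := fgr (mpos k) n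
def zidx (k : ℕ → ℕ) (i : ℕ) : ℕ := fgr (zoneStartPos k) i

section K
variable {k : ℕ → ℕ} (hk : StrictMono k)
include hk

lemma zs_le (j : ℕ) : zoneStartPos k j ≤ k j := by
  cases j with
  | zero => exact Nat.zero_le _
  | succ j => exact hk (Nat.lt_succ_self j)

lemma zs_mono : StrictMono (zoneStartPos k) := by
  apply strictMono_nat_of_lt_succ
  intro j
  exact Nat.lt_succ_of_le (zs_le hk j)

lemma mpos_mono : StrictMono (mpos k) := by
  intro a b h
  exact Nat.add_lt_add (zs_mono hk h) h

omit hk in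
lemma mpos_succ (j : ℕ) : mpos k (j + 1) = k j + j + 2 := by
  simp [mpos, zoneStartPos]; omega

lemma jz_mpos (j : ℕ) : jz k (mpos k j) = j :=
  fgr_eq (mpos_mono hk) rfl le_rfl (mpos_mono hk (Nat.lt_succ_self j))

lemma jz_letter {i j : ℕ} (h1 : zoneStartPos k j ≤ i) (h2 : i ≤ k j) :
    jz k (i + j + 1) = j := by
  refine fgr_eq (mpos_mono hk) rfl ?_ ?_
  · unfold mpos; omega
  · rw [mpos_succ]; omega

lemma zidx_eq {i j : ℕ} (h1 : zoneStartPos k j ≤ i) (h2 : i ≤ k j) :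
    zidx k i = j := by
  refine fgr_eq (zs_mono hk) rfl h1 ?_
  show i < k j + 1
  omega

lemma zidx_spec (i : ℕ) :
    zoneStartPos k (zidx k i) ≤ i ∧ i ≤ k (zidx k i) := by
  obtain ⟨h1, h2⟩ := fgr_spec (zs_mono hk) rfl i
  have e : fgr (zoneStartPos k) i = zidx k i := rfl
  rw [e] at h1 h2
  have e2 : zoneStartPos k (zidx k i + 1) = k (zidx k i) + 1 := rfl
  omega

lemma pos_cases (n : ℕ) :
    n = mpos k (jz k n) ∨
      (∃ i, zoneStartPos k (jz k n) ≤ i ∧ i ≤ k (jz k n) ∧ n = i + jz k n + 1) := by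
  obtain ⟨h1, h2⟩ := fgr_spec (mpos_mono hk) rfl n
  have e : fgr (mpos k) n = jz k n := rfl
  rw [mpos_succ, e] at h2
  rw [e] at h1
  have e2 : mpos k (jz k n) = zoneStartPos k (jz k n) + jz k n := rfl
  rcases eq_or_lt_of_le h1 with h | h
  · exact Or.inl h.symm
  · right
    refine ⟨n - jz k n - 1, ?_, ?_, ?_⟩ <;> omega

lemma kj_ne {i j : ℕ} (h1 : zoneStartPos k j ≤ i) (h2 : i < k j) (j' : ℕ) :
    k j' ≠ i := by
  rcases lt_or_ge j' j with h | h
  · obtain ⟨j'', rfl⟩ : ∃ j'', j = j'' + 1 := ⟨j - 1, by omega⟩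
    have h3 : k j' ≤ k j'' := hk.le_iff_le.mpr (by omega)
    have h4 : zoneStartPos k (j'' + 1) = k j'' + 1 := rfl
    omega
  · have : k j ≤ k j' := hk.le_iff_le.mpr h
    omega

lemma zs_zero_iff {j : ℕ} (h : zoneStartPos k j = 0) : j = 0 := by
  cases j with
  | zero => rfl
  | succ j => exact absurd h (by show k j + 1 ≠ 0; omega)

end K

/-! ### Mode / state functions -/

def modeOf (k : ℕ → ℕ) (n : ℕ) : ZMode :=
  if n = mpos k (jz k n) then (if jz k n = 0 then ZMode.star else ZMode.bot)
  else if n - jz k n - 1 = k (jz k n) then ZMode.inr else ZMode.top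

def zrun (M : Buchi (A × Tri × Tri)) (k : ℕ → ℕ) (ρ : ℕ → M.Q) (n : ℕ) : M.Q :=
  if n = mpos k (jz k n) then (if jz k n = 0 then M.init else ρ (k (jz k n - 1)))
  else ρ (n - jz k n - 1)

section Compute
variable {k : ℕ → ℕ} (hk : StrictMono k) {M : Buchi (A × Tri × Tri)} {ρ : ℕ → M.Q}
include hk

lemma modeOf_mpos (j : ℕ) :
    modeOf k (mpos k j) = if j = 0 then ZMode.star else ZMode.bot := by
  unfold modeOf
  rw [jz_mpos hk, if_pos rfl]

lemma zrun_mpos (j : ℕ) :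
    zrun M k ρ (mpos k j) = if j = 0 then M.init else ρ (k (j - 1)) := by
  unfold zrun
  rw [jz_mpos hk, if_pos rfl]

lemma letter_ne_mpos {i j : ℕ} (h1 : zoneStartPos k j ≤ i) (hj : jz k (i + j + 1) = j) :
    i + j + 1 ≠ mpos k (jz k (i + j + 1)) := by
  rw [hj]
  unfold mpos
  omega

lemma modeOf_letter {i j : ℕ} (h1 : zoneStartPos k j ≤ i) (h2 : i ≤ k j) :
    modeOf k (i + j + 1) = if i = k j then ZMode.inr else ZMode.top := by
  unfold modeOf
  have hj := jz_letter hk h1 h2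
  rw [if_neg (letter_ne_mpos hk h1 hj), hj]
  have e3 : i + j + 1 - j - 1 = i := by omega
  rw [e3]

lemma zrun_letter {i j : ℕ} (h1 : zoneStartPos k j ≤ i) (h2 : i ≤ k j) :
    zrun M k ρ (i + j + 1) = ρ i := by
  unfold zrun
  have hj := jz_letter hk h1 h2
  rw [if_neg (letter_ne_mpos hk h1 hj), hj]
  have e3 : i + j + 1 - j - 1 = i := by omega
  rw [e3]

end Compute

lemma jz_zero (k : ℕ → ℕ) : jz k 0 = 0 := rfl

lemma modeOf_zero (k : ℕ → ℕ) : modeOf k 0 = ZMode.star := rfl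

/-! ### The explicit zonal projection -/

def zc (w : ℕ → A × ℕ) (k : ℕ → ℕ) (n : ℕ) : A ⊕ Finset A :=
  if n = mpos k (jz k n) then
    Sum.inr (segLabels w (zoneStartPos k (jz k n)) (k (jz k n)))
  else Sum.inl (w (n - jz k n - 1)).1

lemma zc_spec {w : ℕ → A × ℕ} {k : ℕ → ℕ} (hk : StrictMono k) :
    IsZonalProj w k (zc w k) := by
  intro j
  constructor
  · show zc w k (mpos k j) = _
    unfold zc
    rw [jz_mpos hk, if_pos rfl]
  · intro i h1 h2
    unfold zc
    have hj := jz_letter hk h1 h2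
    rw [if_neg (letter_ne_mpos hk h1 hj), hj]
    have e3 : i + j + 1 - j - 1 = i := by omega
    rw [e3]

/-! ### Profile characterization -/

section Profile
variable {w : ℕ → A × ℕ} {k : ℕ → ℕ} (hk : StrictMono k)
  (hz : ∀ i : ℕ, ((w i).2 ≠ (w (i + 1)).2 ↔ ∃ j, k j = i))
include hk hz

lemma profile_char {i j : ℕ} (h1 : zoneStartPos k j ≤ i) (h2 : i ≤ k j) :
    profileAt w i = ((w i).1,
      (if i = 0 then Tri.star else
        if i = zoneStartPos k j then Tri.bot else Tri.top),
      (if i = k j then Tri.bot else Tri.top)) := by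
  unfold profileAt
  refine congrArg (Prod.mk _) (congrArg₂ Prod.mk ?_ ?_)
  · by_cases h0 : i = 0
    · simp [h0]
    · rw [if_neg h0, if_neg h0]
      by_cases hs : i = zoneStartPos k j
      · rw [if_pos hs]
        have hj : j ≠ 0 := by
          intro hj0
          apply h0
          rw [hs, hj0]
          rfl
        obtain ⟨j'', rfl⟩ : ∃ j'', j = j'' + 1 := ⟨j - 1, by omega⟩
        have hkk : i - 1 = k j'' := by
          have : zoneStartPos k (j'' + 1) = k j'' + 1 := rfl
          omega
        have hne : (w (i - 1)).2 ≠ (w i).2 := by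
          have := (hz (i - 1)).mpr ⟨j'', hkk.symm⟩
          have hi1 : i - 1 + 1 = i := by omega
          rwa [hi1] at this
        rw [if_neg hne]
      · rw [if_neg hs]
        have heq : (w (i - 1)).2 = (w i).2 := by
          by_contra hne
          have hi1 : i - 1 + 1 = i := by omega
          rw [← hi1] at hne
          obtain ⟨j', hj'⟩ := (hz (i - 1)).mp hne
          exact kj_ne hk (by omega : zoneStartPos k j ≤ i - 1)
            (by omega : i - 1 < k j) j' hj'
        rw [if_pos heq]
  · by_cases hke : i = k j
    · rw [if_pos hke]
      have hne : (w i).2 ≠ (w (i + 1)).2 := (hz i).mpr ⟨j, hke.symm⟩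
      rw [if_neg hne]
    · rw [if_neg hke]
      have heq : (w i).2 = (w (i + 1)).2 := by
        by_contra hne
        obtain ⟨j', hj'⟩ := (hz i).mp hne
        exact kj_ne hk h1 (by omega) j' hj'
      rw [if_pos heq]

end Profile

lemma ZTrans_inv {M : Buchi (A × Tri × Tri)} {s t : Option (M.Q × ZMode)} {x : A ⊕ Finset A}
    (h : ZTrans M s x t) :
    (∃ S, s = none ∧ x = Sum.inr S ∧ t = some (M.init, ZMode.star)) ∨
    (∃ q S, s = some (q, ZMode.inr) ∧ x = Sum.inr S ∧ t = some (q, ZMode.bot)) ∨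
    (∃ q q' a e r, e ≠ ZMode.inr ∧ (q, (a, triL e, triR r), q') ∈ M.trans ∧
      s = some (q, e) ∧ x = Sum.inl a ∧ t = some (q', modeR r)) := by
  cases h with
  | init S => exact Or.inl ⟨S, rfl, rfl, rfl⟩
  | marker q S => exact Or.inr (Or.inl ⟨q, S, rfl, rfl, rfl⟩)
  | letter q q' a e r he ht => exact Or.inr (Or.inr ⟨q, q', a, e, r, he, ht, rfl, rfl, rfl⟩)

lemma triR_of_modeR {b : Bool} {c : Prop} [Decidable c]
    (h : modeR b = if c then ZMode.inr else ZMode.top) :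
    triR b = if c then Tri.bot else Tri.top := by
  by_cases hc : c <;> cases b <;> simp [hc, modeR, triR] at h ⊢

lemma modeR_ne_inr {b : Bool} (h : modeR b ≠ ZMode.inr) : b = true := by
  cases b
  · simp [modeR] at h
  · rfl

lemma zmode_pigeon (P : ZMode → ℕ → Prop) (h : ∀ N, ∃ n, N ≤ n ∧ ∃ m, P m n) :
    ∃ m, ∀ N, ∃ n, N ≤ n ∧ P m n := by
  by_contra hc
  push_neg at hc
  obtain ⟨N1, h1⟩ := hc ZMode.star
  obtain ⟨N2, h2⟩ := hc ZMode.top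
  obtain ⟨N3, h3⟩ := hc ZMode.bot
  obtain ⟨N4, h4⟩ := hc ZMode.inr
  obtain ⟨n, hn, m, hm⟩ := h (N1 + N2 + N3 + N4)
  cases m
  · exact h1 n (by omega) hm
  · exact h2 n (by omega) hm
  · exact h3 n (by omega) hm
  · exact h4 n (by omega) hm

/-- **Zonal automata**: for every Büchi automaton `M` over
`Σ × {*,⊤,⊥} × {*,⊤,⊥}` there is a Büchi automaton `B` over `Σ ∪ 2^Σ` such
that for every data ω-word `w` with infinitely many zones:
`Profile(w) ∈ L(M)` iff `Proj(Zonal(w)) ∈ L(B)`. -/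
theorem exists_zonal_automaton (M : Buchi (A × Tri × Tri)) :
    ∃ B : Buchi (A ⊕ Finset A),
      ∀ (w : ℕ → A × ℕ) (k : ℕ → ℕ), IsZonalPartition w k →
        (∃ z, IsZonalProj w k z) ∧
        ∀ z : ℕ → A ⊕ Finset A, IsZonalProj w k z →
          (M.Accepts (fun i => profileAt w i) ↔ B.Accepts z) := by
  refine ⟨zB M, ?_⟩
  rintro w k ⟨hk, hz⟩
  refine ⟨⟨zc w k, zc_spec hk⟩, ?_⟩
  intro z hzp
  have hzm : ∀ j, z (mpos k j) = Sum.inr (segLabels w (zoneStartPos k j) (k j)) :=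
    fun j => (hzp j).1
  have hzl : ∀ {i j : ℕ}, zoneStartPos k j ≤ i → i ≤ k j →
      z (i + j + 1) = Sum.inl (w i).1 := fun {i j} h1 h2 => (hzp j).2 i h1 h2
  constructor
  · rintro ⟨ρ, hρ0, hρs, q, hqF, hqfreq⟩
    refine ⟨fun n => some (zrun M k ρ n, modeOf k n), ?_, ?_, ?_⟩
    · show ZTrans M none (z 0) (some (zrun M k ρ 0, modeOf k 0))
      have h0 : z 0 = Sum.inr (segLabels w (zoneStartPos k 0) (k 0)) := hzm 0
      rw [h0]
      have e1 : zrun M k ρ 0 = M.init := rfl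
      have e2 : modeOf k 0 = ZMode.star := rfl
      rw [e1, e2]
      exact ZTrans.init _
    · intro n
      show ZTrans M (some (zrun M k ρ n, modeOf k n)) (z (n + 1))
        (some (zrun M k ρ (n + 1), modeOf k (n + 1)))
      rcases pos_cases hk (n + 1) with hn | ⟨i, h1, h2, hn⟩
      · -- marker position
        have hj0 : jz k (n + 1) ≠ 0 := by
          intro h
          rw [h] at hn
          exact absurd hn (by simp [mpos, zoneStartPos])
        obtain ⟨j'', hj''⟩ : ∃ j'', jz k (n + 1) = j'' + 1 := ⟨jz k (n + 1) - 1, by omega⟩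
        rw [hj''] at hn
        have hnval : n = k j'' + j'' + 1 := by rw [mpos_succ] at hn; omega
        have hstart : zoneStartPos k j'' ≤ k j'' := zs_le hk j''
        have em : modeOf k n = ZMode.inr := by
          rw [hnval, modeOf_letter hk hstart le_rfl, if_pos rfl]
        have eq1 : zrun M k ρ n = ρ (k j'') := by
          rw [hnval]; exact zrun_letter hk hstart le_rfl
        have em2 : modeOf k (n + 1) = ZMode.bot := by
          rw [hn, modeOf_mpos hk]; simp
        have eq2 : zrun M k ρ (n + 1) = ρ (k j'') := by
          rw [hn, zrun_mpos hk]; simp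
        have hzv : z (n + 1) = Sum.inr (segLabels w (zoneStartPos k (j'' + 1)) (k (j'' + 1))) := by
          rw [hn]; exact hzm (j'' + 1)
        rw [em, eq1, em2, eq2, hzv]
        exact ZTrans.marker _ _
      · -- letter position
        set j := jz k (n + 1) with hjdef
        have hzv : z (n + 1) = Sum.inl (w i).1 := by rw [hn]; exact hzl h1 h2
        have em2 : modeOf k (n + 1) = if i = k j then ZMode.inr else ZMode.top := by
          rw [hn]; exact modeOf_letter hk h1 h2
        have eq2 : zrun M k ρ (n + 1) = ρ i := by
          rw [hn]; exact zrun_letter hk h1 h2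
        have hprof := profile_char hk hz h1 h2
        obtain ⟨r, hr1, hr2⟩ : ∃ r : Bool, modeR r = modeOf k (n + 1) ∧
            triR r = (if i = k j then Tri.bot else Tri.top) := by
          by_cases hik : i = k j
          · exact ⟨false, by rw [em2, if_pos hik, if_pos hik]; exact ⟨rfl, rfl⟩⟩
          · exact ⟨true, by rw [em2, if_neg hik, if_neg hik]; exact ⟨rfl, rfl⟩⟩
        rw [hzv, eq2, ← hr1]
        by_cases hi0 : i = 0
        · have hj0 : j = 0 := zs_zero_iff hk (by omega)
          have hnz : n = 0 := by omega
          subst hi0 hnz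
          have e1 : zrun M k ρ 0 = M.init := rfl
          have e2 : modeOf k 0 = ZMode.star := rfl
          rw [e1, e2]
          refine ZTrans.letter _ _ _ _ r (by simp) ?_
          have : ((w 0).1, triL ZMode.star, triR r) = profileAt w 0 := by
            rw [hprof, hr2]
            have : (if (0:ℕ) = 0 then Tri.star else
                if 0 = zoneStartPos k j then Tri.bot else Tri.top) = Tri.star := by simp
            rw [this]
            rfl
          rw [this]
          exact hρ0
        · by_cases his : i = zoneStartPos k j
          · -- start of a zone, j ≥ 1
            have hj1 : j ≠ 0 := by
              intro h
              apply hi0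
              rw [his, h]
              rfl
            obtain ⟨j'', hj''⟩ : ∃ j'', j = j'' + 1 := ⟨j - 1, by omega⟩
            have hik : i = k j'' + 1 := by
              rw [his, hj'']; rfl
            have hnm : n = mpos k (j'' + 1) := by
              rw [mpos_succ]; omega
            have em1 : modeOf k n = ZMode.bot := by
              rw [hnm, modeOf_mpos hk]; simp
            have eq1 : zrun M k ρ n = ρ (k j'') := by
              rw [hnm, zrun_mpos hk]; simp
            rw [em1, eq1]
            refine ZTrans.letter _ _ _ ZMode.bot r (by simp) ?_
            have hstep := hρs (k j'')
            have hkk : k j'' + 1 = i := hik.symm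
            rw [hkk] at hstep
            have : ((w i).1, triL ZMode.bot, triR r) = profileAt w i := by
              rw [hprof, hr2, if_neg hi0, if_pos his]
              rfl
            rw [this]
            exact hstep
          · -- interior of a zone
            have hi1 : zoneStartPos k j ≤ i - 1 := by omega
            have hi2 : i - 1 ≤ k j := by omega
            have hnm : n = (i - 1) + j + 1 := by omega
            have em1 : modeOf k n = ZMode.top := by
              rw [hnm, modeOf_letter hk hi1 hi2, if_neg (by omega)]
            have eq1 : zrun M k ρ n = ρ (i - 1) := by
              rw [hnm]; exact zrun_letter hk hi1 hi2
            rw [em1, eq1]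
            refine ZTrans.letter _ _ _ ZMode.top r (by simp) ?_
            have hstep := hρs (i - 1)
            have hkk : i - 1 + 1 = i := by omega
            rw [hkk] at hstep
            have : ((w i).1, triL ZMode.top, triR r) = profileAt w i := by
              rw [hprof, hr2, if_neg hi0, if_neg his]
              rfl
            rw [this]
            exact hstep
    · -- acceptance, forward
      have hQ : ∀ i : ℕ, zrun M k ρ (i + zidx k i + 1) = ρ i := by
        intro i
        obtain ⟨ha, hb⟩ := zidx_spec hk i
        exact zrun_letter hk ha hb
      obtain ⟨m, hm⟩ := zmode_pigeon
          (fun m n => (some (zrun M k ρ n, modeOf k n) : Option (M.Q × ZMode)) = some (q, m))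
          (fun N => by
            obtain ⟨i, hi, hiq⟩ := hqfreq N
            exact ⟨i + zidx k i + 1, by omega, modeOf k (i + zidx k i + 1),
              by show some (zrun M k ρ (i + zidx k i + 1), modeOf k (i + zidx k i + 1)) = _
                 rw [hQ i, hiq]⟩)
      refine ⟨some (q, m), ⟨q, m, rfl, hqF⟩, fun N => ?_⟩
      obtain ⟨n, hn, he⟩ := hm N
      exact ⟨n, hn, he⟩
  · rintro ⟨σ, hσ0, hσs, s, hsF, hsfreq⟩
    obtain ⟨q₀, m₀, rfl, hq₀F⟩ := hsF
    have hstep : ∀ n, ZTrans M (σ n) (z (n + 1)) (σ (n + 1)) := hσs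
    have h00 : σ 0 = some (M.init, ZMode.star) := by
      have h : ZTrans M none (z 0) (σ 0) := hσ0
      rw [show z 0 = Sum.inr (segLabels w (zoneStartPos k 0) (k 0)) from hzm 0] at h
      rcases ZTrans_inv h with ⟨S, _, _, ht⟩ | ⟨q1, S, hs1, _, _⟩ |
        ⟨q1, q1', a, e, r, _, _, _, hx, _⟩
      · exact ht
      · exact absurd hs1 (by simp)
      · exact absurd hx (by simp)
    have shape : ∀ n, σ n = some (exQ M (σ n), modeOf k n) := by
      intro n
      induction n with
      | zero => rw [h00]; rfl
      | succ n ih =>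
        rcases pos_cases hk (n + 1) with hn | ⟨i, h1, h2, hn⟩
        · have hj0 : jz k (n + 1) ≠ 0 := by
            intro h
            rw [h] at hn
            exact absurd hn (by simp [mpos, zoneStartPos])
          obtain ⟨j'', hj''⟩ : ∃ j'', jz k (n + 1) = j'' + 1 := ⟨jz k (n + 1) - 1, by omega⟩
          rw [hj''] at hn
          have hnval : n = k j'' + j'' + 1 := by rw [mpos_succ] at hn; omega
          have em : modeOf k n = ZMode.inr := by
            rw [hnval, modeOf_letter hk (zs_le hk j'') le_rfl, if_pos rfl]
          have hzv : z (n + 1) =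
              Sum.inr (segLabels w (zoneStartPos k (j'' + 1)) (k (j'' + 1))) := by
            rw [hn]; exact hzm (j'' + 1)
          have h := hstep n
          rw [hzv, ih, em] at h
          rcases ZTrans_inv h with ⟨S, hs1, _, _⟩ | ⟨q1, S, hs1, _, ht⟩ |
            ⟨q1, q1', a, e, r, _, _, _, hx, _⟩
          · exact absurd hs1 (by simp)
          · have em2 : modeOf k (n + 1) = ZMode.bot := by
              rw [hn, modeOf_mpos hk]; simp
            rw [em2, ht]
            rfl
          · exact absurd hx (by simp)
        · obtain ⟨j, hjd⟩ : ∃ j, jz k (n + 1) = j := ⟨_, rfl⟩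
          rw [hjd] at h1 h2 hn
          have hzv : z (n + 1) = Sum.inl (w i).1 := by rw [hn]; exact hzl h1 h2
          have h := hstep n
          rw [hzv, ih] at h
          rcases ZTrans_inv h with ⟨S, hs1, _, _⟩ | ⟨q1, S, _, hx, _⟩ |
            ⟨q1, q1', a, e, r, he, htr, hs1, hx, ht⟩
          · exact absurd hs1 (by simp)
          · exact absurd hx (by simp)
          · have em2 : modeOf k (n + 1) =
                if i = k (j) then ZMode.inr else ZMode.top := by
              rw [hn]; exact modeOf_letter hk h1 h2
            have hmode : modeR r = modeOf k (n + 1) := by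
              by_cases hik : i = k (j)
              · have hn2 : n + 2 = mpos k (j + 1) := by rw [mpos_succ]; omega
                have hzv2 : z (n + 2) = Sum.inr (segLabels w
                    (zoneStartPos k (j + 1)) (k (j + 1))) := by
                  rw [hn2]; exact hzm _
                have h2' := hstep (n + 1)
                rw [show n + 1 + 1 = n + 2 from rfl, hzv2, ht] at h2'
                rcases ZTrans_inv h2' with ⟨S', hs2, _, _⟩ | ⟨q2, S', hs2, _, _⟩ |
                  ⟨q2, q2', a', e', r', _, _, _, hx2, _⟩
                · exact absurd hs2 (by simp)
                · rw [Option.some.injEq, Prod.mk.injEq] at hs2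
                  rw [em2, if_pos hik, hs2.2]
                · exact absurd hx2 (by simp)
              · have hn2 : n + 2 = (i + 1) + j + 1 := by omega
                have hzv2 : z (n + 2) = Sum.inl (w (i + 1)).1 := by
                  rw [hn2]; exact hzl (by omega) (by omega)
                have h2' := hstep (n + 1)
                rw [show n + 1 + 1 = n + 2 from rfl, hzv2, ht] at h2'
                rcases ZTrans_inv h2' with ⟨S', hs2, _, _⟩ | ⟨q2, S', _, hx2, _⟩ |
                  ⟨q2, q2', a', e', r', he2, _, hs2, _, _⟩
                · exact absurd hs2 (by simp)
                · exact absurd hx2 (by simp)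
                · rw [Option.some.injEq, Prod.mk.injEq] at hs2
                  have hr : r = true := modeR_ne_inr (by rw [hs2.2]; exact he2)
                  rw [em2, if_neg hik, hr]
                  rfl
            rw [ht, ← hmode]
            rfl
    refine ⟨fun i => exQ M (σ (i + zidx k i + 1)), ?_, ?_, ?_⟩
    · -- initial transition
      show (M.init, profileAt w 0, exQ M (σ (0 + zidx k 0 + 1))) ∈ M.trans
      have hb1 : zoneStartPos k 0 ≤ 0 := Nat.le_refl 0
      have hb2 : (0 : ℕ) ≤ k 0 := Nat.zero_le _
      have h := hstep 0
      have hzv : z 1 = Sum.inl (w 0).1 := hzl hb1 hb2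
      rw [h00, hzv] at h
      rcases ZTrans_inv h with ⟨S, hs1, _, _⟩ | ⟨q1, S, hs1, _, _⟩ |
        ⟨q1, q1', a, e, r, he, htr, hs1, hx, ht⟩
      · exact absurd hs1 (by simp)
      · exact absurd hs1 (by
          rw [Option.some.injEq, Prod.mk.injEq]
          rintro ⟨-, h'⟩
          exact ZMode.noConfusion h')
      · rw [Option.some.injEq, Prod.mk.injEq] at hs1
        rw [Sum.inl.injEq] at hx
        have hq1 : exQ M (σ (0 + zidx k 0 + 1)) = q1' := by
          show exQ M (σ 1) = q1'
          rw [ht]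
          rfl
        have hmode : modeR r = modeOf k 1 := by
          have hs := shape 1
          rw [ht] at hs
          injection hs with h'
          exact congrArg Prod.snd h'
        have hmv : modeOf k 1 = if 0 = k 0 then ZMode.inr else ZMode.top :=
          modeOf_letter hk hb1 hb2
        have htriR : triR r = if 0 = k 0 then Tri.bot else Tri.top :=
          triR_of_modeR (hmode.trans hmv)
        have hpr : profileAt w 0 = ((w 0).1, triL ZMode.star, triR r) := by
          rw [profile_char hk hz hb1 hb2, htriR, if_pos rfl]
          rfl
        rw [hq1, hpr, hs1.1, hx, hs1.2]
        exact htr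
    · -- step transitions
      intro i
      obtain ⟨hj1, hj2⟩ := zidx_spec hk i
      show (exQ M (σ (i + zidx k i + 1)), profileAt w (i + 1),
        exQ M (σ (i + 1 + zidx k (i + 1) + 1))) ∈ M.trans
      by_cases hik : i = k (zidx k i)
      · -- crossing a zone boundary
        have hkk : k (zidx k i) < k (zidx k i + 1) := hk (Nat.lt_succ_self _)
        have hb1 : zoneStartPos k (zidx k i + 1) ≤ i + 1 := by
          show k (zidx k i) + 1 ≤ i + 1; omega
        have hb2 : i + 1 ≤ k (zidx k i + 1) := by omega
        have hj' : zidx k (i + 1) = zidx k i + 1 := zidx_eq hk hb1 hb2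
        have hA := hstep (i + zidx k i + 1)
        have hzvA : z (i + zidx k i + 2) = Sum.inr (segLabels w
            (zoneStartPos k (zidx k i + 1)) (k (zidx k i + 1))) := by
          rw [show i + zidx k i + 2 = mpos k (zidx k i + 1) from by rw [mpos_succ]; omega]
          exact hzm _
        have hshA := shape (i + zidx k i + 1)
        have emA : modeOf k (i + zidx k i + 1) = ZMode.inr := by
          rw [modeOf_letter hk hj1 hj2, if_pos hik]
        rw [show i + zidx k i + 1 + 1 = i + zidx k i + 2 from rfl, hzvA] at hA
        rw [hshA, emA] at hA
        rcases ZTrans_inv hA with ⟨S, hs1, _, _⟩ | ⟨q2, S, hs2, _, htA⟩ |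
          ⟨_, _, _, _, _, _, _, _, hx, _⟩
        · exact absurd hs1 (by simp)
        · rw [Option.some.injEq, Prod.mk.injEq] at hs2
          have hB := hstep (i + zidx k i + 2)
          have hzvB : z (i + zidx k i + 3) = Sum.inl (w (i + 1)).1 := by
            rw [show i + zidx k i + 3 = (i + 1) + (zidx k i + 1) + 1 from by omega]
            exact hzl hb1 hb2
          rw [show i + zidx k i + 2 + 1 = i + zidx k i + 3 from rfl, hzvB, htA] at hB
          rcases ZTrans_inv hB with ⟨S', hs3, _, _⟩ | ⟨_, _, _, hx3, _⟩ |
            ⟨q3, q3', a, e, r, he, htr, hs3, hx3, ht3⟩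
          · exact absurd hs3 (by simp)
          · exact absurd hx3 (by simp)
          · rw [Option.some.injEq, Prod.mk.injEq] at hs3
            rw [Sum.inl.injEq] at hx3
            have hq3 : exQ M (σ (i + zidx k i + 3)) = q3' := by rw [ht3]; rfl
            have hmode : modeR r = modeOf k (i + zidx k i + 3) := by
              have hs := shape (i + zidx k i + 3)
              rw [ht3] at hs
              injection hs with h'
              exact congrArg Prod.snd h'
            have hmv : modeOf k (i + zidx k i + 3) =
                if i + 1 = k (zidx k i + 1) then ZMode.inr else ZMode.top := by
              rw [show i + zidx k i + 3 = (i + 1) + (zidx k i + 1) + 1 from by omega]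
              exact modeOf_letter hk hb1 hb2
            have htriR : triR r = if i + 1 = k (zidx k i + 1) then Tri.bot else Tri.top :=
              triR_of_modeR (hmode.trans hmv)
            have hpr : profileAt w (i + 1) = ((w (i + 1)).1, triL ZMode.bot, triR r) := by
              rw [profile_char hk hz hb1 hb2, htriR, if_neg (by omega : ¬ i + 1 = 0),
                if_pos (show i + 1 = zoneStartPos k (zidx k i + 1) from by
                  show i + 1 = k (zidx k i) + 1; omega)]
              rfl
            rw [show i + 1 + zidx k (i + 1) + 1 = i + zidx k i + 3 from by rw [hj']; omega]
            rw [hq3, hpr, hs2.1, hs3.1, hx3, hs3.2]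
            exact htr
        · exact absurd hx (by simp)
      · -- staying in the same zone
        have hlt : i < k (zidx k i) := lt_of_le_of_ne hj2 hik
        have hb1 : zoneStartPos k (zidx k i) ≤ i + 1 := by omega
        have hb2 : i + 1 ≤ k (zidx k i) := by omega
        have hj' : zidx k (i + 1) = zidx k i := zidx_eq hk hb1 hb2
        have hA := hstep (i + zidx k i + 1)
        have hzvA : z (i + zidx k i + 2) = Sum.inl (w (i + 1)).1 := by
          rw [show i + zidx k i + 2 = (i + 1) + zidx k i + 1 from by omega]
          exact hzl hb1 hb2
        have hshA := shape (i + zidx k i + 1)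
        have emA : modeOf k (i + zidx k i + 1) = ZMode.top := by
          rw [modeOf_letter hk hj1 hj2, if_neg hik]
        rw [show i + zidx k i + 1 + 1 = i + zidx k i + 2 from rfl, hzvA, hshA, emA] at hA
        rcases ZTrans_inv hA with ⟨S, hs1, _, _⟩ | ⟨_, _, _, hx2, _⟩ |
          ⟨q3, q3', a, e, r, he, htr, hs3, hx3, ht3⟩
        · exact absurd hs1 (by simp)
        · exact absurd hx2 (by simp)
        · rw [Option.some.injEq, Prod.mk.injEq] at hs3
          rw [Sum.inl.injEq] at hx3
          have hq3 : exQ M (σ (i + zidx k i + 2)) = q3' := by rw [ht3]; rfl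
          have hmode : modeR r = modeOf k (i + zidx k i + 2) := by
            have hs := shape (i + zidx k i + 2)
            rw [ht3] at hs
            injection hs with h'
            exact congrArg Prod.snd h'
          have hmv : modeOf k (i + zidx k i + 2) =
              if i + 1 = k (zidx k i) then ZMode.inr else ZMode.top := by
            rw [show i + zidx k i + 2 = (i + 1) + zidx k i + 1 from by omega]
            exact modeOf_letter hk hb1 hb2
          have htriR : triR r = if i + 1 = k (zidx k i) then Tri.bot else Tri.top :=
            triR_of_modeR (hmode.trans hmv)
          have hpr : profileAt w (i + 1) = ((w (i + 1)).1, triL ZMode.top, triR r) := by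
            rw [profile_char hk hz hb1 hb2, htriR, if_neg (by omega : ¬ i + 1 = 0),
              if_neg (show ¬ i + 1 = zoneStartPos k (zidx k i) from by omega)]
            rfl
          rw [show i + 1 + zidx k (i + 1) + 1 = i + zidx k i + 2 from by rw [hj']; omega]
          rw [hq3, hpr, hs3.1, hx3, hs3.2]
          exact htr
    · -- acceptance, backward
      refine ⟨q₀, hq₀F, fun N => ?_⟩
      obtain ⟨n, hn, hσn⟩ := hsfreq (2 * N + 2)
      have hqn : exQ M (σ n) = q₀ := by rw [hσn]; rfl
      rcases pos_cases hk n with hm | ⟨i, h1, h2, hm⟩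
      · -- n is a marker position
        have hj0 : jz k n ≠ 0 := by
          intro h
          rw [h] at hm
          have : mpos k 0 = 0 := rfl
          omega
        obtain ⟨j'', hj''⟩ : ∃ j'', jz k n = j'' + 1 := ⟨jz k n - 1, by omega⟩
        rw [hj''] at hm
        have hnval : n = k j'' + j'' + 2 := by rw [mpos_succ] at hm; omega
        have hprev := hstep (k j'' + j'' + 1)
        have hzv : z (k j'' + j'' + 2) = Sum.inr (segLabels w
            (zoneStartPos k (j'' + 1)) (k (j'' + 1))) := by
          rw [show k j'' + j'' + 2 = mpos k (j'' + 1) from (mpos_succ _).symm]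
          exact hzm _
        have hshp := shape (k j'' + j'' + 1)
        rw [show k j'' + j'' + 1 + 1 = k j'' + j'' + 2 from rfl, hzv, hshp] at hprev
        rcases ZTrans_inv hprev with ⟨S, hs1, _, _⟩ | ⟨q2, S, hs2, _, ht2⟩ |
          ⟨_, _, _, _, _, _, _, _, hx, _⟩
        · exact absurd hs1 (by simp)
        · rw [Option.some.injEq, Prod.mk.injEq] at hs2
          have hkj : k j'' ≥ j'' := hk.le_apply
          refine ⟨k j'', by omega, ?_⟩
          show exQ M (σ (k j'' + zidx k (k j'') + 1)) = q₀
          rw [zidx_eq hk (zs_le hk j'') le_rfl, hs2.1]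
          have : exQ M (σ n) = q2 := by rw [hnval, ht2]; rfl
          rw [← this, hqn]
        · exact absurd hx (by simp)
      · -- n is a letter position
        have hji : zidx k i = jz k n := zidx_eq hk h1 h2
        have hsj : jz k n ≤ zoneStartPos k (jz k n) := (zs_mono hk).le_apply
        refine ⟨i, by omega, ?_⟩
        show exQ M (σ (i + zidx k i + 1)) = q₀
        rw [hji, ← hm, hσn]
        rfl
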